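/- arXiv:1607.00833 — 2 statements merged into one kernel-verified Lean document; each statement's English description precedes it below -/
import Mathlib

section
/- For every (r_i, r_j, r_k) ∈ ℝ³_{>0}, the extended inner angle θ̃_i of a generalized hyperbolic inversive-distance triangle with nonnegative inversive distances satisfies 0 ≤ θ̃_i ≤ π - Λ(I_jk). -/
open Real

noncomputable def Lambda (x : ℝ) : ℝ :=
  if x ≤ -1 then π else if x ≤ 1 then arccos x else 0

noncomputable def arcosh (x : ℝ) : ℝ := Real.log (x + Real.sqrt (x ^ 2 - 1))

/-- Hyperbolic edge length of two circles of radii `r, s` with inversive distance `I`. -/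
noncomputable def hlen (r s I : ℝ) : ℝ :=
  _root_.arcosh (Real.cosh r * Real.cosh s + I * Real.sinh r * Real.sinh s)

lemma arccos_antitone {x y : ℝ} (h : x ≤ y) : arccos y ≤ arccos x := by
  rw [Real.arccos_eq_pi_div_two_sub_arcsin, Real.arccos_eq_pi_div_two_sub_arcsin]
  have := Real.monotone_arcsin h
  linarith

lemma cosh_sinh_arcosh (a : ℝ) (ha : 1 ≤ a) :
    Real.cosh (_root_.arcosh a) = a ∧ Real.sinh (_root_.arcosh a) = Real.sqrt (a ^ 2 - 1) := by
  have h1 : (0:ℝ) ≤ a ^ 2 - 1 := by nlinarith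
  have hsq : Real.sqrt (a ^ 2 - 1) ^ 2 = a ^ 2 - 1 := Real.sq_sqrt h1
  have hs0 : 0 ≤ Real.sqrt (a ^ 2 - 1) := Real.sqrt_nonneg _
  have htpos : 0 < a + Real.sqrt (a ^ 2 - 1) := by nlinarith
  have hmul : (a - Real.sqrt (a ^ 2 - 1)) * (a + Real.sqrt (a ^ 2 - 1)) = 1 := by nlinarith
  have hinv : (a + Real.sqrt (a ^ 2 - 1))⁻¹ = a - Real.sqrt (a ^ 2 - 1) :=
    (eq_inv_of_mul_eq_one_left hmul).symm
  unfold _root_.arcosh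
  rw [Real.cosh_eq, Real.sinh_eq, Real.exp_log htpos, Real.exp_neg, Real.exp_log htpos, hinv]
  constructor <;> ring

lemma Lambda_bounds {x I : ℝ} (hI : 0 ≤ I) (hx : -I ≤ x) :
    0 ≤ Lambda x ∧ Lambda x ≤ π - Lambda I := by
  constructor
  · unfold Lambda
    split_ifs
    · exact Real.pi_pos.le
    · exact Real.arccos_nonneg _
    · exact le_refl 0
  · unfold Lambda
    split_ifs with h1 h2 h3 h4 h5 h6 h7 h8
    · linarith
    · have hI1 : (1:ℝ) ≤ I := by linarith
      have : I = 1 := le_antisymm h3 hI1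
      rw [this, Real.arccos_one]
      linarith
    · linarith
    · linarith
    · rw [← Real.arccos_neg]
      exact arccos_antitone hx
    · linarith [Real.arccos_le_pi x]
    · linarith
    · linarith [Real.arccos_le_pi I, Real.arccos_nonneg x]
    · linarith [Real.pi_pos]

set_option maxHeartbeats 1000000 in
/-- For every `(r_i, r_j, r_k) ∈ ℝ³_{>0}`, the extended inner angle `θ̃_i` of a
generalized hyperbolic inversive-distance triangle with nonnegative inversive
distances satisfies `0 ≤ θ̃_i ≤ π - Λ(I_jk)`. -/
theorem extended_angle_bounds (ri rj rk Iij Ijk Iik : ℝ)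
    (hri : 0 < ri) (hrj : 0 < rj) (hrk : 0 < rk)
    (hIij : 0 ≤ Iij) (hIjk : 0 ≤ Ijk) (hIik : 0 ≤ Iik) :
    0 ≤ Lambda ((Real.cosh (hlen ri rj Iij) * Real.cosh (hlen ri rk Iik)
        - Real.cosh (hlen rj rk Ijk)) /
      (Real.sinh (hlen ri rj Iij) * Real.sinh (hlen ri rk Iik))) ∧
    Lambda ((Real.cosh (hlen ri rj Iij) * Real.cosh (hlen ri rk Iik)
        - Real.cosh (hlen rj rk Ijk)) /
      (Real.sinh (hlen ri rj Iij) * Real.sinh (hlen ri rk Iik))) ≤ π - Lambda Ijk := by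
  have hCi := Real.one_le_cosh ri
  have hCj := Real.one_le_cosh rj
  have hCk := Real.one_le_cosh rk
  have hSi : 0 < Real.sinh ri := Real.sinh_pos_iff.mpr hri
  have hSj : 0 < Real.sinh rj := Real.sinh_pos_iff.mpr hrj
  have hSk : 0 < Real.sinh rk := Real.sinh_pos_iff.mpr hrk
  set a := Real.cosh ri * Real.cosh rj + Iij * Real.sinh ri * Real.sinh rj with ha_def
  set b := Real.cosh ri * Real.cosh rk + Iik * Real.sinh ri * Real.sinh rk with hb_def
  set c := Real.cosh rj * Real.cosh rk + Ijk * Real.sinh rj * Real.sinh rk with hc_def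
  have hPij : 0 ≤ Iij * (Real.sinh ri * Real.sinh rj) := mul_nonneg hIij (mul_pos hSi hSj).le
  have hPik : 0 ≤ Iik * (Real.sinh ri * Real.sinh rk) := mul_nonneg hIik (mul_pos hSi hSk).le
  have hPjk : 0 ≤ Ijk * (Real.sinh rj * Real.sinh rk) := mul_nonneg hIjk (mul_pos hSj hSk).le
  have ha1 : 1 ≤ a := by rw [ha_def]; nlinarith [hPij]
  have hb1 : 1 ≤ b := by rw [hb_def]; nlinarith [hPik]
  have haj : Real.cosh rj ≤ a := by rw [ha_def]; nlinarith [hPij]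
  have hbk : Real.cosh rk ≤ b := by rw [hb_def]; nlinarith [hPik]
  obtain ⟨hca, hsa⟩ := cosh_sinh_arcosh a ha1
  obtain ⟨hcb, hsb⟩ := cosh_sinh_arcosh b hb1
  obtain ⟨hcc, hsc⟩ := cosh_sinh_arcosh c (by rw [hc_def]; nlinarith [hPjk])
  have hsq2j : Real.sinh rj ^ 2 = Real.cosh rj ^ 2 - 1 := by
    have := Real.cosh_sq rj; linarith
  have hsq2k : Real.sinh rk ^ 2 = Real.cosh rk ^ 2 - 1 := by
    have := Real.cosh_sq rk; linarith
  have hsaj : Real.sinh rj ≤ Real.sqrt (a ^ 2 - 1) := by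
    rw [Real.le_sqrt' hSj]
    nlinarith [haj, hCj, hsq2j]
  have hsbk : Real.sinh rk ≤ Real.sqrt (b ^ 2 - 1) := by
    rw [Real.le_sqrt' hSk]
    nlinarith [hbk, hCk, hsq2k]
  have hD : 0 < Real.sqrt (a ^ 2 - 1) * Real.sqrt (b ^ 2 - 1) := by
    have := mul_pos (hSj.trans_le hsaj) (hSk.trans_le hsbk)
    positivity
  have hkey : c - a * b ≤ Ijk * (Real.sqrt (a ^ 2 - 1) * Real.sqrt (b ^ 2 - 1)) := by
    have h1 : a * b ≥ Real.cosh rj * Real.cosh rk := by nlinarith [haj, hbk, hCj, hCk, mul_le_mul haj hbk (by linarith) (by linarith)]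
    have h2 : Ijk * (Real.sinh rj * Real.sinh rk) ≤
        Ijk * (Real.sqrt (a ^ 2 - 1) * Real.sqrt (b ^ 2 - 1)) := by
      apply mul_le_mul_of_nonneg_left _ hIjk
      exact mul_le_mul hsaj hsbk hSk.le (Real.sqrt_nonneg _)
    calc c - a * b ≤ Ijk * (Real.sinh rj * Real.sinh rk) := by rw [hc_def]; nlinarith
    _ ≤ _ := h2
  have hx : -Ijk ≤ (a * b - c) / (Real.sqrt (a ^ 2 - 1) * Real.sqrt (b ^ 2 - 1)) := by
    rw [le_div_iff₀ hD]
    nlinarith [hkey]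
  have heq1 : hlen ri rj Iij = _root_.arcosh a := by unfold hlen; rw [ha_def]
  have heq2 : hlen ri rk Iik = _root_.arcosh b := by unfold hlen; rw [hb_def]
  have heq3 : hlen rj rk Ijk = _root_.arcosh c := by unfold hlen; rw [hc_def]
  rw [heq1, heq2, heq3, hca, hcb, hcc, hsa, hsb]
  exact Lambda_bounds hIjk hx
end

section
/- For any ε > 0 and any fixed nonnegative inversive distances, there exists l > 0 such that in any (generalized) hyperbolic inversive-distance triangle with radii r_i, r_j, r_k > 0 and r_i > l, the (extended) inner angle θ̃_i at vertex i is smaller than ε. -/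
open Real
set_option maxHeartbeats 1000000

lemma cosh_arcosh' {t : ℝ} (ht : 1 ≤ t) : Real.cosh (_root_.arcosh t) = t := by
  have hs : Real.sqrt (t ^ 2 - 1) ^ 2 = t ^ 2 - 1 :=
    Real.sq_sqrt (by nlinarith)
  have hs0 : 0 ≤ Real.sqrt (t ^ 2 - 1) := Real.sqrt_nonneg _
  have hu : 0 < t + Real.sqrt (t ^ 2 - 1) := by nlinarith
  rw [_root_.arcosh, Real.cosh_eq, Real.exp_log hu, Real.exp_neg, Real.exp_log hu]
  rw [inv_eq_one_div]
  field_simp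
  nlinarith

lemma sinh_arcosh' {t : ℝ} (ht : 1 ≤ t) : Real.sinh (_root_.arcosh t) = Real.sqrt (t ^ 2 - 1) := by
  have hs : Real.sqrt (t ^ 2 - 1) ^ 2 = t ^ 2 - 1 :=
    Real.sq_sqrt (by nlinarith)
  have hs0 : 0 ≤ Real.sqrt (t ^ 2 - 1) := Real.sqrt_nonneg _
  have hu : 0 < t + Real.sqrt (t ^ 2 - 1) := by nlinarith
  rw [_root_.arcosh, Real.sinh_eq, Real.exp_log hu, Real.exp_neg, Real.exp_log hu]
  rw [inv_eq_one_div]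
  field_simp
  nlinarith

/-- Key estimate (Lemma 3.3): for any `ε > 0` and fixed nonnegative inversive
distances, there is `l > 0` such that in any generalized hyperbolic inversive-distance
triangle with `r_i > l`, the extended inner angle `θ̃_i` is smaller than `ε`. -/
theorem large_radius_small_angle (ε Iij Ijk Iik : ℝ) (hε : 0 < ε)
    (hIij : 0 ≤ Iij) (hIjk : 0 ≤ Ijk) (hIik : 0 ≤ Iik) :
    ∃ l : ℝ, 0 < l ∧ ∀ ri rj rk : ℝ, 0 < ri → 0 < rj → 0 < rk → l < ri →
      Lambda ((Real.cosh (hlen ri rj Iij) * Real.cosh (hlen ri rk Iik)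
          - Real.cosh (hlen rj rk Ijk)) /
        (Real.sinh (hlen ri rj Iij) * Real.sinh (hlen ri rk Iik))) < ε := by
  set θ := min ε (π / 2) with hθdef
  have hπ : 0 < π := Real.pi_pos
  have hθ0 : 0 < θ := lt_min hε (by linarith)
  have hθπ2 : θ ≤ π / 2 := min_le_right _ _
  set c := Real.cos θ with hcdef
  have hc0 : 0 ≤ c := Real.cos_nonneg_of_mem_Icc ⟨by linarith, hθπ2⟩
  have hc1 : c < 1 := by
    have := Real.strictAntiOn_cos ⟨le_refl 0, by linarith⟩ ⟨by linarith, by linarith⟩ hθ0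
    simpa using this
  set K := (1 + Ijk) / (1 - c) with hKdef
  have hK0 : 0 < K := div_pos (by linarith) (by linarith)
  have hsK : 0 < Real.sqrt K := Real.sqrt_pos.2 hK0
  have hsKsq : Real.sqrt K ^ 2 = K := Real.sq_sqrt hK0.le
  set l := _root_.arcosh (Real.sqrt K + 1) with hldef
  have hcl : Real.cosh l = Real.sqrt K + 1 := cosh_arcosh' (by linarith)
  have hl0 : 0 < l := by
    have hs0 : 0 ≤ Real.sqrt ((Real.sqrt K + 1) ^ 2 - 1) := Real.sqrt_nonneg _
    have : (1 : ℝ) < Real.sqrt K + 1 + Real.sqrt ((Real.sqrt K + 1) ^ 2 - 1) := by linarith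
    exact Real.log_pos this
  refine ⟨l, hl0, ?_⟩
  intro ri rj rk hri hrj hrk hlri
  have hchi : 1 < Real.cosh ri := Real.one_lt_cosh.2 hri.ne'
  have hchj : 1 < Real.cosh rj := Real.one_lt_cosh.2 hrj.ne'
  have hchk : 1 < Real.cosh rk := Real.one_lt_cosh.2 hrk.ne'
  have hshi : 0 < Real.sinh ri := Real.sinh_pos_iff.2 hri
  have hshj : 0 < Real.sinh rj := Real.sinh_pos_iff.2 hrj
  have hshk : 0 < Real.sinh rk := Real.sinh_pos_iff.2 hrk
  have hscj : Real.sinh rj < Real.cosh rj := Real.sinh_lt_cosh rj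
  have hsck : Real.sinh rk < Real.cosh rk := Real.sinh_lt_cosh rk
  -- cosh ri is large
  have hcoshri : K < Real.cosh ri ^ 2 := by
    have h1 : Real.cosh l < Real.cosh ri :=
      Real.cosh_lt_cosh.2 (by rw [abs_of_pos hl0, abs_of_pos hri]; exact hlri)
    nlinarith
  set X := Real.cosh ri * Real.cosh rj + Iij * Real.sinh ri * Real.sinh rj with hXdef
  set Y := Real.cosh ri * Real.cosh rk + Iik * Real.sinh ri * Real.sinh rk with hYdef
  set Z := Real.cosh rj * Real.cosh rk + Ijk * Real.sinh rj * Real.sinh rk with hZdef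
  have hpij : 0 ≤ Iij * Real.sinh ri * Real.sinh rj := by positivity
  have hpik : 0 ≤ Iik * Real.sinh ri * Real.sinh rk := by positivity
  have hpjk : 0 ≤ Ijk * Real.sinh rj * Real.sinh rk := by positivity
  have hX1 : 1 < X := by
    have := one_lt_mul hchi.le hchj
    linarith
  have hY1 : 1 < Y := by
    have := one_lt_mul hchi.le hchk
    linarith
  have hZ1 : 1 < Z := by
    have := one_lt_mul hchj.le hchk
    linarith
  have hcX : Real.cosh (hlen ri rj Iij) = X := cosh_arcosh' hX1.le
  have hcY : Real.cosh (hlen ri rk Iik) = Y := cosh_arcosh' hY1.le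
  have hcZ : Real.cosh (hlen rj rk Ijk) = Z := cosh_arcosh' hZ1.le
  have hsXe : Real.sinh (hlen ri rj Iij) = Real.sqrt (X ^ 2 - 1) := sinh_arcosh' hX1.le
  have hsYe : Real.sinh (hlen ri rk Iik) = Real.sqrt (Y ^ 2 - 1) := sinh_arcosh' hY1.le
  rw [hcX, hcY, hcZ, hsXe, hsYe]
  set D := Real.sqrt (X ^ 2 - 1) * Real.sqrt (Y ^ 2 - 1) with hDdef
  have hD0 : 0 < D :=
    mul_pos (Real.sqrt_pos.2 (by nlinarith)) (Real.sqrt_pos.2 (by nlinarith))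
  have hDle : D ≤ X * Y := by
    have h1 : Real.sqrt (X ^ 2 - 1) ≤ X := by
      calc Real.sqrt (X ^ 2 - 1) ≤ Real.sqrt (X ^ 2) := Real.sqrt_le_sqrt (by linarith)
        _ = X := Real.sqrt_sq (by linarith)
    have h2 : Real.sqrt (Y ^ 2 - 1) ≤ Y := by
      calc Real.sqrt (Y ^ 2 - 1) ≤ Real.sqrt (Y ^ 2) := Real.sqrt_le_sqrt (by linarith)
        _ = Y := Real.sqrt_sq (by linarith)
    exact mul_le_mul h1 h2 (Real.sqrt_nonneg _) (by linarith)
  -- lower bounds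
  have hXlb : Real.cosh ri * Real.cosh rj ≤ X := by linarith
  have hYlb : Real.cosh ri * Real.cosh rk ≤ Y := by linarith
  have hP0 : 0 < Real.cosh rj * Real.cosh rk := mul_pos (by linarith) (by linarith)
  have hjk : Real.sinh rj * Real.sinh rk ≤ Real.cosh rj * Real.cosh rk :=
    mul_le_mul hscj.le hsck.le hshk.le (by linarith)
  have hZub : Z ≤ (1 + Ijk) * (Real.cosh rj * Real.cosh rk) := by
    have h := mul_le_mul_of_nonneg_left hjk hIjk
    have : Z = Real.cosh rj * Real.cosh rk + Ijk * (Real.sinh rj * Real.sinh rk) := by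
      rw [hZdef]; ring
    rw [this]
    linarith [h, hP0]
  have hXYlb : Real.cosh ri ^ 2 * (Real.cosh rj * Real.cosh rk) ≤ X * Y := by
    have h := mul_le_mul hXlb hYlb (by positivity) (by linarith : (0:ℝ) ≤ X)
    calc Real.cosh ri ^ 2 * (Real.cosh rj * Real.cosh rk)
        = Real.cosh ri * Real.cosh rj * (Real.cosh ri * Real.cosh rk) := by ring
      _ ≤ X * Y := h
  have hKP : K * (Real.cosh rj * Real.cosh rk) < X * Y :=
    lt_of_lt_of_le (mul_lt_mul_of_pos_right hcoshri hP0) hXYlb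
  have hKc : K * (1 - c) = 1 + Ijk := div_mul_cancel₀ _ (by linarith : (1:ℝ) - c ≠ 0)
  have h2' := mul_lt_mul_of_pos_left hKP (show (0:ℝ) < 1 - c by linarith)
  have h3 : (1 - c) * (K * (Real.cosh rj * Real.cosh rk))
      = (1 + Ijk) * (Real.cosh rj * Real.cosh rk) := by rw [← hKc]; ring
  have hZlt : Z < (1 - c) * (X * Y) := by linarith
  have hratio : c < (X * Y - Z) / D := by
    rw [lt_div_iff₀ hD0]
    have hcd : c * D ≤ c * (X * Y) := mul_le_mul_of_nonneg_left hDle hc0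
    have hexp : (1 - c) * (X * Y) = X * Y - c * (X * Y) := by ring
    linarith
  rw [Lambda]
  split_ifs with h1 h2
  · linarith
  · calc Real.arccos ((X * Y - Z) / D)
        < Real.arccos c :=
          Real.strictAntiOn_arccos ⟨by linarith, by linarith⟩ ⟨by linarith, h2⟩ hratio
      _ = θ := Real.arccos_cos (by linarith) (by linarith)
      _ ≤ ε := min_le_left _ _
  · exact hε
end
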